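/- For a tree T_m of order m ≥ 2 and complete graph K_n with n ≥ 2, max{rvc(T_m), n+2} ≤ rvcl(T_m ⋄ K_n) ≤ 2m + n − 2. -/

import Mathlib

open SimpleGraph

/-- A walk is a rainbow vertex path: it is a path and its internal vertices
receive pairwise distinct colors. -/
def IsRainbowPath {V : Type*} (G : SimpleGraph V) {k : ℕ} (c : V → Fin k)
    {u v : V} (p : G.Walk u v) : Prop :=
  p.IsPath ∧ (p.support.tail.dropLast.map c).Nodup

/-- A rainbow vertex coloring: every two vertices are joined by a rainbow vertex path. -/
def IsRVColoring {V : Type*} (G : SimpleGraph V) {k : ℕ} (c : V → Fin k) : Prop :=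
  ∀ u v : V, ∃ p : G.Walk u v, IsRainbowPath G c p

/-- The rainbow vertex connection number. -/
noncomputable def rvc {V : Type*} (G : SimpleGraph V) : ℕ :=
  sInf {k | ∃ c : V → Fin k, IsRVColoring G c}

/-- The rainbow code of a vertex: its vector of distances to the color classes. -/
noncomputable def rainbowCode {V : Type*} (G : SimpleGraph V) {k : ℕ}
    (c : V → Fin k) (v : V) : Fin k → ℕ :=
  fun i => sInf {d | ∃ w, c w = i ∧ G.dist v w = d}

/-- A locating rainbow coloring: a rainbow vertex coloring whose rainbow codes
are pairwise distinct. -/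
def IsLocatingRVColoring {V : Type*} (G : SimpleGraph V) {k : ℕ} (c : V → Fin k) : Prop :=
  IsRVColoring G c ∧ Function.Injective (rainbowCode G c)

/-- The locating rainbow connection number. -/
noncomputable def rvcl {V : Type*} (G : SimpleGraph V) : ℕ :=
  sInf {k | ∃ c : V → Fin k, IsLocatingRVColoring G c}

/-- The edge corona `G ⋄ H`: one copy of `G` together with one copy of `H`
for each edge of `G`, where both endpoints of the edge are joined to
every vertex of the corresponding copy of `H`. -/
def edgeCorona {V W : Type*} (G : SimpleGraph V) (H : SimpleGraph W) :
    SimpleGraph (V ⊕ (G.edgeSet × W)) where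
  Adj x y :=
    match x, y with
    | .inl u, .inl v => G.Adj u v
    | .inl u, .inr (e, _) => u ∈ (e : Sym2 V)
    | .inr (e, _), .inl u => u ∈ (e : Sym2 V)
    | .inr (e, w), .inr (e', w') => e = e' ∧ H.Adj w w'
  symm := by
    refine ⟨?_⟩
    rintro (u | ⟨e, w⟩) (v | ⟨e', w'⟩) h
    · exact h.symm
    · exact h
    · exact h
    · exact ⟨h.1.symm, h.2.symm⟩
  loopless := by
    refine ⟨?_⟩
    rintro (u | ⟨e, w⟩) h
    · exact G.irrefl h
    · exact H.irrefl h.2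

/-- A cut vertex: a vertex whose removal disconnects the graph. -/
def IsCutVertex {V : Type*} (G : SimpleGraph V) (v : V) : Prop :=
  ¬ (G.induce {u | u ≠ v}).Connected


section Aux

variable {V : Type*} {T : SimpleGraph V} {n : ℕ}

/-- Abbreviation for the edge corona with a complete graph. -/
private abbrev EC (T : SimpleGraph V) (n : ℕ) : SimpleGraph (V ⊕ (T.edgeSet × Fin n)) :=
  edgeCorona T (⊤ : SimpleGraph (Fin n))

lemma EC_adj_inl_inl {u v : V} : (EC T n).Adj (Sum.inl u) (Sum.inl v) ↔ T.Adj u v := Iff.rfl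

lemma EC_adj_inl_inr {u : V} {e : T.edgeSet} {w : Fin n} :
    (EC T n).Adj (Sum.inl u) (Sum.inr (e, w)) ↔ u ∈ (e : Sym2 V) := Iff.rfl

lemma EC_adj_inr_inl {u : V} {e : T.edgeSet} {w : Fin n} :
    (EC T n).Adj (Sum.inr (e, w)) (Sum.inl u) ↔ u ∈ (e : Sym2 V) := Iff.rfl

lemma EC_adj_inr_inr {e e' : T.edgeSet} {w w' : Fin n} :
    (EC T n).Adj (Sum.inr (e, w)) (Sum.inr (e', w')) ↔ e = e' ∧ w ≠ w' := by
  constructor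
  · rintro ⟨h1, h2⟩; exact ⟨h1, h2.ne⟩
  · rintro ⟨h1, h2⟩; exact ⟨h1, by simpa using h2⟩

lemma adj_of_mem_edgeSet {e : Sym2 V} (he : e ∈ T.edgeSet) {u a : V}
    (hu : u ∈ e) (ha : a ∈ e) (hne : u ≠ a) : T.Adj u a := by
  induction e using Sym2.ind with
  | _ x y =>
    rw [SimpleGraph.mem_edgeSet] at he
    rw [Sym2.mem_iff] at hu ha
    rcases hu with rfl | rfl <;> rcases ha with rfl | rfl <;>
      first | exact absurd rfl hne | exact he | exact he.symm

/-- The inclusion of `T` into the edge corona as a graph homomorphism. -/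
private def ECinl (T : SimpleGraph V) (n : ℕ) : T →g EC T n where
  toFun := Sum.inl
  map_rel' := fun h => h

@[simp] lemma ECinl_apply (x : V) : ECinl T n x = Sum.inl x := rfl

lemma EC_connected (hc : T.Connected) : (EC T n).Connected := by
  have hne : Nonempty V := hc.nonempty
  have hinl : ∀ u v : V, (EC T n).Reachable (Sum.inl u) (Sum.inl v) := by
    intro u v
    simpa using (hc u v).map (ECinl T n)
  have hr : ∀ s : V ⊕ (T.edgeSet × Fin n), ∃ u : V, (EC T n).Reachable s (Sum.inl u) := by
    rintro (u | ⟨e, w⟩)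
    · exact ⟨u, Reachable.refl _⟩
    · obtain ⟨a, b, hab⟩ : ∃ a b, (e : Sym2 V) = s(a, b) := Sym2.ind (fun a b => ⟨a, b, rfl⟩) (e : Sym2 V)
      exact ⟨a, ((EC_adj_inr_inl (T := T)).mpr (by rw [hab]; exact Sym2.mem_mk_left a b)).reachable⟩
  rw [connected_iff]
  refine ⟨fun s t => ?_, ⟨Sum.inl (Classical.arbitrary V)⟩⟩
  obtain ⟨u, hu⟩ := hr s
  obtain ⟨v, hv⟩ := hr t
  exact (hu.trans (hinl u v)).trans hv.symm

end Aux

section PartB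

variable {V : Type*} {T : SimpleGraph V} {n : ℕ}

lemma EC_project {s t : V ⊕ (T.edgeSet × Fin n)} (p : (EC T n).Walk s t) :
    ∀ v : V, t = Sum.inl v →
      (∀ u, s = Sum.inl u →
        ∃ W : T.Walk u v, ∀ x ∈ W.support, Sum.inl x ∈ p.support) ∧
      (∀ (e : T.edgeSet) (w : Fin n) (u : V), s = Sum.inr (e, w) → u ∈ (e : Sym2 V) →
        ∃ W : T.Walk u v, ∀ x ∈ W.support, x = u ∨ Sum.inl x ∈ p.support) := by
  induction p with
  | nil =>
    rintro v rfl
    constructor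
    · rintro u hu
      rw [Sum.inl.injEq] at hu
      subst hu
      exact ⟨Walk.nil, by simp⟩
    · rintro e w u hu
      simp at hu
  | @cons a b t h q ih =>
    rintro v rfl
    obtain ⟨ih1, ih2⟩ := ih v rfl
    constructor
    · rintro u rfl
      rcases b with z | ⟨e, w⟩
      · obtain ⟨W, hW⟩ := ih1 z rfl
        refine ⟨Walk.cons (EC_adj_inl_inl.mp h) W, ?_⟩
        intro x hx
        rw [Walk.support_cons] at hx ⊢
        rcases List.mem_cons.mp hx with rfl | hx
        · exact List.mem_cons_self
        · exact List.mem_cons_of_mem _ (hW x hx)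
      · obtain ⟨W, hW⟩ := ih2 e w u rfl h
        refine ⟨W, fun x hx => ?_⟩
        rw [Walk.support_cons]
        rcases hW x hx with rfl | hx'
        · exact List.mem_cons_self
        · exact List.mem_cons_of_mem _ hx'
    · rintro e w u rfl hu
      rcases b with z | ⟨e', w'⟩
      · obtain ⟨W, hW⟩ := ih1 z rfl
        by_cases huz : u = z
        · subst huz
          exact ⟨W, fun x hx => Or.inr (by
            rw [Walk.support_cons]; exact List.mem_cons_of_mem _ (hW x hx))⟩
        · have hadj : T.Adj u z := adj_of_mem_edgeSet e.2 hu h huz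
          refine ⟨Walk.cons hadj W, fun x hx => ?_⟩
          rw [Walk.support_cons] at hx
          rcases List.mem_cons.mp hx with rfl | hx
          · exact Or.inl rfl
          · exact Or.inr (by
              rw [Walk.support_cons]; exact List.mem_cons_of_mem _ (hW x hx))
      · obtain ⟨W, hW⟩ := ih2 e' w' u rfl (h.1 ▸ hu)
        refine ⟨W, fun x hx => (hW x hx).imp id fun hx' => ?_⟩
        rw [Walk.support_cons]
        exact List.mem_cons_of_mem _ hx'

lemma support_tail_getLast {V' : Type*} {G : SimpleGraph V'} {u v : V'} (p : G.Walk u v)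
    (hne : p.support.tail ≠ []) : p.support.tail.getLast hne = v := by
  cases p with
  | nil => simp at hne
  | cons h q => exact q.getLast_support

/-- A vertex of a walk that is neither endpoint lies in the internal support. -/
lemma mem_internal_support {V' : Type*} {G : SimpleGraph V'} {u v x : V'} {p : G.Walk u v}
    (hx : x ∈ p.support) (h1 : x ≠ u) (h2 : x ≠ v) : x ∈ p.support.tail.dropLast := by
  have hx' : x ∈ p.support.tail := by
    rw [p.support_eq_cons] at hx
    rcases List.mem_cons.mp hx with rfl | hx
    · exact absurd rfl h1
    · exact hx
  have hne : p.support.tail ≠ [] := List.ne_nil_of_mem hx'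
  have hlast : p.support.tail.getLast hne = v := support_tail_getLast p hne
  rw [← List.dropLast_append_getLast hne] at hx'
  rcases List.mem_append.mp hx' with hx'' | hx''
  · exact hx''
  · rw [hlast] at hx''
    exact absurd (List.mem_singleton.mp hx'') h2

lemma isRainbowPath_of_injOn {V' : Type*} {G : SimpleGraph V'} {k : ℕ} {c : V' → Fin k}
    {u v : V'} {p : G.Walk u v} (hp : p.IsPath)
    (h : ∀ a ∈ p.support.tail.dropLast, ∀ b ∈ p.support.tail.dropLast, c a = c b → a = b) :
    IsRainbowPath G c p := by
  refine ⟨hp, List.Nodup.map_on h ?_⟩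
  exact hp.support_nodup.sublist ((List.dropLast_sublist _).trans (List.tail_sublist _))

lemma rvc_coloring_of_EC {k : ℕ} {c : (V ⊕ (T.edgeSet × Fin n)) → Fin k}
    (hc : IsRVColoring (EC T n) c) : IsRVColoring T (fun x => c (Sum.inl x)) := by
  classical
  intro u v
  obtain ⟨p, hp, hnd⟩ := hc (Sum.inl u) (Sum.inl v)
  obtain ⟨W0, hW⟩ := (EC_project p v rfl).1 u rfl
  set W := W0.toPath with hWdef
  refine ⟨W.1, isRainbowPath_of_injOn W.2 ?_⟩
  have hsub : (W.1.support.tail.dropLast : List V).Sublist W.1.support :=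
    (List.dropLast_sublist _).trans (List.tail_sublist _)
  have hmem : ∀ x ∈ (W.1.support.tail.dropLast : List V),
      Sum.inl x ∈ p.support.tail.dropLast := by
    intro x hx
    have hxs : x ∈ W.1.support := hsub.mem hx
    have hnodup := W.2.support_nodup
    have hxu : x ≠ u := by
      rintro rfl
      rw [W.1.support_eq_cons] at hnodup
      exact (List.nodup_cons.mp hnodup).1 ((List.dropLast_sublist _).mem hx)
    have hxv : x ≠ v := by
      rintro rfl
      have htl : x ∈ W.1.support.tail := (List.dropLast_sublist _).mem hx
      have hne : W.1.support.tail ≠ [] := List.ne_nil_of_mem htl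
      have hlast : W.1.support.tail.getLast hne = x := support_tail_getLast W.1 hne
      have hnd2 : W.1.support.tail.Nodup := by
        rw [W.1.support_eq_cons] at hnodup
        exact (List.nodup_cons.mp hnodup).2
      rw [← List.dropLast_append_getLast hne, List.nodup_append] at hnd2
      exact hnd2.2.2 x hx x (by rw [hlast]; exact List.mem_singleton_self x) rfl
    exact mem_internal_support (hW x (Walk.support_toPath_subset _ hxs)) (by simpa using hxu)
      (by simpa using hxv)
  intro a ha b hb hab
  exact Sum.inl_injective (List.inj_on_of_nodup_map hnd (hmem a ha) (hmem b hb) hab)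

end PartB

section Codes

variable {V' : Type*} {G : SimpleGraph V'} {k : ℕ} {c : V' → Fin k}

lemma rainbowCode_self (v : V') : rainbowCode G c v (c v) = 0 :=
  Nat.sInf_eq_zero.mpr (Or.inl ⟨v, rfl, SimpleGraph.dist_self⟩)

lemma rainbowCode_eq_zero_iff (hG : G.Connected) {v : V'} {i : Fin k} (hne : ∃ w, c w = i) :
    rainbowCode G c v i = 0 ↔ c v = i := by
  constructor
  · intro h0
    rcases Nat.sInf_eq_zero.mp h0 with h | h
    · obtain ⟨w, hw, hd⟩ := h
      rwa [(hG v w).dist_eq_zero_iff.mp hd]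
    · obtain ⟨w, hw⟩ := hne
      exact absurd h (Set.Nonempty.ne_empty ⟨G.dist v w, w, hw, rfl⟩)
  · intro h
    exact h ▸ rainbowCode_self v

lemma rainbowCode_eq_one (hG : G.Connected) {v : V'} {i : Fin k} (hvi : c v ≠ i)
    (h : ∃ w, c w = i ∧ G.Adj v w) : rainbowCode G c v i = 1 := by
  obtain ⟨w, hw, hadj⟩ := h
  have h1 : (1 : ℕ) ∈ {d | ∃ w, c w = i ∧ G.dist v w = d} :=
    ⟨w, hw, SimpleGraph.dist_eq_one_iff_adj.mpr hadj⟩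
  have hle : rainbowCode G c v i ≤ 1 := Nat.sInf_le h1
  have h0 : rainbowCode G c v i ≠ 0 := fun hz =>
    hvi ((rainbowCode_eq_zero_iff hG ⟨w, hw⟩).mp hz)
  omega

lemma rainbowCode_unique {w : V'} {i : Fin k} (hu : ∀ y, c y = i → y = w) (hw : c w = i)
    (v : V') : rainbowCode G c v i = G.dist v w := by
  have hset : {d | ∃ y, c y = i ∧ G.dist v y = d} = {G.dist v w} := by
    ext d
    constructor
    · rintro ⟨y, hy, rfl⟩
      rw [hu y hy]; rfl
    · rintro rfl
      exact ⟨w, hw, rfl⟩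
  show sInf _ = _
  rw [hset, csInf_singleton]

lemma dist_le_twin (hG : G.Connected) {a b y : V'} (hab : G.Adj a b)
    (h : ∀ x, x ≠ a → x ≠ b → (G.Adj a x ↔ G.Adj b x)) (hya : y ≠ a) :
    G.dist b y ≤ G.dist a y := by
  obtain ⟨p, hp⟩ := (hG a y).exists_walk_length_eq_dist
  cases p with
  | nil => exact absurd rfl hya
  | @cons _ x _ h' q =>
    rw [Walk.length_cons] at hp
    by_cases hxb : x = b
    · subst hxb
      have := SimpleGraph.dist_le q
      omega
    · have hxa : x ≠ a := (G.ne_of_adj h').symm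
      have hbx : G.Adj b x := (h x hxa hxb).mp h'
      have := SimpleGraph.dist_le (Walk.cons hbx q)
      rw [Walk.length_cons] at this
      omega

lemma rainbowCode_eq_twin (hG : G.Connected) {a b : V'} (hab : G.Adj a b)
    (h : ∀ x, x ≠ a → x ≠ b → (G.Adj a x ↔ G.Adj b x)) (hc : c a = c b) :
    rainbowCode G c a = rainbowCode G c b := by
  have h' : ∀ x, x ≠ b → x ≠ a → (G.Adj b x ↔ G.Adj a x) := fun x h1 h2 => (h x h2 h1).symm
  have hd : ∀ y, y ≠ a → y ≠ b → G.dist a y = G.dist b y := fun y hya hyb =>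
    le_antisymm (dist_le_twin hG hab.symm h' hyb) (dist_le_twin hG hab h hya)
  funext i
  by_cases hi : c a = i
  · have h1 : rainbowCode G c a i = 0 := hi ▸ rainbowCode_self a
    have h2 : rainbowCode G c b i = 0 := (hc ▸ hi : c b = i) ▸ rainbowCode_self b
    rw [h1, h2]
  · simp only [rainbowCode]
    congr 1
    ext d
    constructor
    · rintro ⟨y, hy, rfl⟩
      have hya : y ≠ a := fun hh => hi (hh ▸ hy)
      have hyb : y ≠ b := fun hh => hi (hc ▸ hh ▸ hy)
      exact ⟨y, hy, (hd y hya hyb).symm⟩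
    · rintro ⟨y, hy, rfl⟩
      have hya : y ≠ a := fun hh => hi (hh ▸ hy)
      have hyb : y ≠ b := fun hh => hi (hc ▸ hh ▸ hy)
      exact ⟨y, hy, hd y hya hyb⟩

end Codes

section Leaf

lemma exists_leaf {V : Type*} [Fintype V] {T : SimpleGraph V} (hT : T.IsTree)
    (hm : 2 ≤ Fintype.card V) : ∃ u v : V, T.Adj u v ∧ ∀ z, T.Adj u z → z = v := by
  classical
  have hconn := hT.isConnected
  have hne : Nonempty V := hconn.nonempty
  obtain ⟨r⟩ := hne
  obtain ⟨u, -, hu⟩ := Finset.exists_max_image Finset.univ (fun x => T.dist r x)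
    ⟨r, Finset.mem_univ r⟩
  have hur : u ≠ r := by
    obtain ⟨y, hy⟩ := Fintype.exists_ne_of_one_lt_card (by omega) r
    have h1 : 0 < T.dist r y := (hconn r y).pos_dist_of_ne (Ne.symm hy)
    intro h
    have h2 := hu y (Finset.mem_univ y)
    rw [h] at h2
    rw [SimpleGraph.dist_self] at h2
    omega
  have key : ∀ z, T.Adj u z → ∃ p : T.Walk u r, p.IsPath ∧ p.support.tail.head? = some z := by
    intro z hz
    obtain ⟨q, hq⟩ := (hconn r z).exists_walk_length_eq_dist
    set Q := q.bypass with hQdef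
    have hQpath : Q.IsPath := q.bypass_isPath
    have hQlen : Q.length ≤ T.dist r z := hq ▸ q.length_bypass_le
    have huQ : u ∉ Q.support := by
      intro hmem
      have h2 : Q.length = (Q.takeUntil u hmem).length + (Q.dropUntil u hmem).length := by
        rw [← Walk.length_append, Walk.take_spec]
      have h3 : (Q.dropUntil u hmem).length ≠ 0 := by
        intro h0
        have huz : u = z := Walk.eq_of_length_eq_zero h0
        exact T.loopless.irrefl u (huz ▸ hz)
      have h4 : T.dist r u ≤ (Q.takeUntil u hmem).length := SimpleGraph.dist_le _
      have h6 : T.dist r z ≤ T.dist r u := hu z (Finset.mem_univ z)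
      omega
    refine ⟨Walk.cons hz Q.reverse, ?_, ?_⟩
    · exact Walk.IsPath.cons hQpath.reverse (by simpa [Walk.support_reverse] using huQ)
    · rw [Walk.support_cons, List.tail_cons, Q.reverse.support_eq_cons]
      rfl
  obtain ⟨P⟩ := hconn u r
  cases P with
  | nil => exact absurd rfl hur
  | @cons _ z0 _ h0 q0 =>
    refine ⟨u, z0, h0, ?_⟩
    intro z hz
    obtain ⟨p1, hp1, hh1⟩ := key z hz
    obtain ⟨p2, hp2, hh2⟩ := key z0 h0
    obtain ⟨pu, -, hpuniq⟩ := hT.existsUnique_path u r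
    rw [hpuniq p1 hp1] at hh1
    rw [hpuniq p2 hp2] at hh2
    rw [hh2] at hh1
    exact Option.some_injective _ hh1.symm
end Leaf

section PartA

variable {V : Type*} {T : SimpleGraph V} {n : ℕ}

lemma lower_bound_nplus2 [Fintype V] (hT : T.IsTree) (hm : 2 ≤ Fintype.card V)
    {k : ℕ} {c : (V ⊕ (T.edgeSet × Fin n)) → Fin k}
    (hc : IsLocatingRVColoring (EC T n) c) : n + 2 ≤ k := by
  classical
  have hconn : (EC T n).Connected := EC_connected hT.isConnected
  have hinj := hc.2
  obtain ⟨u, v, huv, hleaf⟩ := exists_leaf hT hm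
  set e : T.edgeSet := ⟨s(u, v), huv⟩ with hedef
  have hue : u ∈ (e : Sym2 V) := Sym2.mem_mk_left u v
  have hve : v ∈ (e : Sym2 V) := Sym2.mem_mk_right u v
  have huniqedge : ∀ e' : T.edgeSet, u ∈ (e' : Sym2 V) → e' = e := by
    rintro ⟨e', he'⟩ hmem
    obtain ⟨z, rfl⟩ := Sym2.mem_iff_exists.mp hmem
    have hz : T.Adj u z := he'
    have := hleaf z hz
    subst this
    rfl
  -- twin pair: two vertices of the same copy
  have tw1 : ∀ w w' : Fin n, w ≠ w' →
      c (Sum.inr (e, w)) = c (Sum.inr (e, w')) → False := by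
    intro w w' hww' hcc
    have hab : (EC T n).Adj (Sum.inr (e, w)) (Sum.inr (e, w')) :=
      (EC_adj_inr_inr).mpr ⟨rfl, hww'⟩
    have hnbr : ∀ x, x ≠ Sum.inr (e, w) → x ≠ Sum.inr (e, w') →
        ((EC T n).Adj (Sum.inr (e, w)) x ↔ (EC T n).Adj (Sum.inr (e, w')) x) := by
      rintro (z | ⟨e'', w''⟩) hxa hxb
      · exact Iff.rfl
      · rw [EC_adj_inr_inr, EC_adj_inr_inr]
        constructor
        · rintro ⟨rfl, h2⟩
          exact ⟨rfl, fun hh => hxb (by rw [← hh])⟩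
        · rintro ⟨rfl, h2⟩
          exact ⟨rfl, fun hh => hxa (by rw [← hh])⟩
    have := hinj (rainbowCode_eq_twin hconn hab hnbr hcc)
    rw [Sum.inr.injEq, Prod.mk.injEq] at this
    exact hww' this.2
  -- twin pair: the leaf and a vertex of its copy
  have tw2 : ∀ w : Fin n, c (Sum.inl u) = c (Sum.inr (e, w)) → False := by
    intro w hcc
    have hab : (EC T n).Adj (Sum.inl u) (Sum.inr (e, w)) := hue
    have hnbr : ∀ x, x ≠ Sum.inl u → x ≠ Sum.inr (e, w) →
        ((EC T n).Adj (Sum.inl u) x ↔ (EC T n).Adj (Sum.inr (e, w)) x) := by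
      rintro (z | ⟨e'', w''⟩) hxa hxb
      · rw [EC_adj_inl_inl, EC_adj_inr_inl]
        constructor
        · intro h; rw [hleaf z h]; exact hve
        · intro h
          have hz : z ∈ s(u, v) := h
          rcases Sym2.mem_iff.mp hz with rfl | rfl
          · exact absurd rfl hxa
          · exact huv
      · rw [EC_adj_inl_inr, EC_adj_inr_inr]
        constructor
        · intro h
          have he'' : e'' = e := huniqedge e'' h
          subst he''
          exact ⟨rfl, fun hh => hxb (by rw [← hh])⟩
        · rintro ⟨rfl, -⟩
          exact hue
    have := hinj (rainbowCode_eq_twin hconn hab hnbr hcc)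
    simp at this
  -- the clique map
  set g : Fin (n + 1) → V ⊕ (T.edgeSet × Fin n) :=
    Fin.lastCases (Sum.inl u) (fun j => Sum.inr (e, j)) with hgdef
  have hglast : g (Fin.last n) = Sum.inl u := by simp [hgdef]
  have hgcast : ∀ j : Fin n, g j.castSucc = Sum.inr (e, j) := by
    intro j; simp [hgdef]
  have hginj : Function.Injective (fun i => c (g i)) := by
    intro i j hcij
    induction i using Fin.lastCases with
    | last =>
      induction j using Fin.lastCases with
      | last => rfl
      | cast j0 =>
        have hcij2 : c (g (Fin.last n)) = c (g j0.castSucc) := hcij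
        rw [hglast, hgcast] at hcij2
        exact absurd hcij2 (fun hh => tw2 j0 hh)
    | cast i0 =>
      induction j using Fin.lastCases with
      | last =>
        have hcij2 : c (g i0.castSucc) = c (g (Fin.last n)) := hcij
        rw [hglast, hgcast] at hcij2
        exact absurd hcij2.symm (fun hh => tw2 i0 hh)
      | cast j0 =>
        have hcij2 : c (g i0.castSucc) = c (g j0.castSucc) := hcij
        rw [hgcast, hgcast] at hcij2
        by_cases hij : i0 = j0
        · rw [hij]
        · exact absurd hcij2 (fun hh => tw1 i0 j0 hij hh)
  have hk1 : n + 1 ≤ k := by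
    have := Fintype.card_le_of_injective _ hginj
    simpa using this
  by_contra hlt
  push_neg at hlt
  have hk : k = n + 1 := by omega
  subst hk
  have hsurj : Function.Surjective (fun i => c (g i)) :=
    Finite.injective_iff_surjective.mp hginj
  -- adjacency within the clique {v} ∪ range g
  have hgv : ∀ i, (EC T n).Adj (Sum.inl v) (g i) := by
    intro i
    induction i using Fin.lastCases with
    | last => rw [hglast]; exact huv.symm
    | cast j0 => rw [hgcast]; exact hve
  have hgadj : ∀ i j, i ≠ j → (EC T n).Adj (g i) (g j) := by
    intro i j hij
    induction i using Fin.lastCases with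
    | last =>
      induction j using Fin.lastCases with
      | last => exact absurd rfl hij
      | cast j0 => rw [hglast, hgcast]; exact hue
    | cast i0 =>
      induction j using Fin.lastCases with
      | last => rw [hglast, hgcast]; exact hue
      | cast j0 =>
        rw [hgcast, hgcast]
        refine (EC_adj_inr_inr).mpr ⟨rfl, fun hh => hij (by rw [hh])⟩
  -- the rainbow code pattern on the clique
  have pattern : ∀ x, (x = Sum.inl v ∨ ∃ i, x = g i) → ∀ j,
      rainbowCode (EC T n) c x j = if j = c x then 0 else 1 := by
    intro x hx j
    by_cases hj : j = c x
    · subst hj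
      rw [if_pos rfl]
      exact rainbowCode_self x
    · rw [if_neg hj]
      obtain ⟨i0, hi0⟩ := hsurj j
      refine rainbowCode_eq_one hconn (fun hh => hj hh.symm) ⟨g i0, hi0, ?_⟩
      rcases hx with rfl | ⟨i1, rfl⟩
      · exact hgv i0
      · refine hgadj i1 i0 ?_
        intro hh
        exact hj (by rw [← hi0, ← hh])
  -- some clique vertex shares its color with v
  obtain ⟨i2, hi2'⟩ := hsurj (c (Sum.inl v))
  have hi2 : c (g i2) = c (Sum.inl v) := hi2' 
  have hne : g i2 ≠ Sum.inl v := by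
    induction i2 using Fin.lastCases with
    | last => rw [hglast]; simp [huv.ne]
    | cast j0 => rw [hgcast]; simp
  apply hne
  apply hinj
  funext j
  rw [pattern (g i2) (Or.inr ⟨i2, rfl⟩) j, pattern (Sum.inl v) (Or.inl rfl) j, hi2]

end PartA

section Upper

variable {V : Type*} {T : SimpleGraph V} {n : ℕ}

lemma list_tail_dropLast {α : Type*} (l : List α) : l.tail.dropLast = l.dropLast.tail := by
  cases l with
  | nil => rfl
  | cons a l =>
    cases l using List.reverseRecOn with
    | nil => rfl
    | append_singleton l b =>
      rw [List.tail_cons, List.dropLast_concat, ← List.cons_append, List.dropLast_concat,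
        List.tail_cons]

lemma list_dropLast_reverse {α : Type*} (l : List α) : l.reverse.dropLast = l.tail.reverse := by
  have := @List.tail_reverse _ l.reverse
  rw [List.reverse_reverse] at this
  rw [← List.reverse_reverse (l.reverse.dropLast), ← this]

lemma IsRainbowPath.rev {V' : Type*} {G : SimpleGraph V'} {k : ℕ} {c : V' → Fin k}
    {u v : V'} {p : G.Walk u v} (h : IsRainbowPath G c p) : IsRainbowPath G c p.reverse := by
  refine ⟨h.1.reverse, ?_⟩
  have hsup : p.reverse.support.tail.dropLast = p.support.tail.dropLast.reverse := by
    rw [Walk.support_reverse, List.tail_reverse, list_dropLast_reverse, list_tail_dropLast]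
  rw [hsup, List.map_reverse]
  exact List.nodup_reverse.mpr h.2

lemma isPath_concat {V' : Type*} {G : SimpleGraph V'} {u v w : V'} {p : G.Walk u v}
    (hp : p.IsPath) (h : G.Adj v w) (hw : w ∉ p.support) : (p.concat h).IsPath := by
  rw [← Walk.isPath_reverse_iff, Walk.reverse_concat]
  exact Walk.IsPath.cons hp.reverse (by simpa [Walk.support_reverse] using hw)

lemma sym2_symmdiff {α : Type*} {e e' : Sym2 α} (h : e ≠ e') :
    ∃ x, (x ∈ e ∧ x ∉ e') ∨ (x ∈ e' ∧ x ∉ e) := by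
  by_contra hc
  push_neg at hc
  exact h (Sym2.ext fun x => ⟨(hc x).1, (hc x).2⟩)

lemma edge_endpoint {e : T.edgeSet} : ∃ a : V, a ∈ (e : Sym2 V) :=
  Sym2.ind (fun p q => ⟨p, Sym2.mem_mk_left p q⟩) (e : Sym2 V)

noncomputable def upCol [Fintype V] (T : SimpleGraph V) (n : ℕ)
    (hm : 2 ≤ Fintype.card V) (hn : 2 ≤ n) :
    (V ⊕ (T.edgeSet × Fin n)) → Fin (2 * Fintype.card V + n - 2) := fun s =>
  match s with
  | Sum.inl x => ⟨(Fintype.equivFin V x : ℕ), by have := (Fintype.equivFin V x).2; omega⟩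
  | Sum.inr (_, w) => ⟨Fintype.card V + (w : ℕ), by have := w.2; omega⟩

lemma upper_exists [Fintype V] (hT : T.IsTree) (hm : 2 ≤ Fintype.card V) (hn : 2 ≤ n) :
    ∃ c : (V ⊕ (T.edgeSet × Fin n)) → Fin (2 * Fintype.card V + n - 2),
      IsLocatingRVColoring (EC T n) c := by
  classical
  have hconn := hT.isConnected
  have hconnE : (EC T n).Connected := EC_connected hconn
  set c := upCol T n hm hn with hcdef
  have hvinl : ∀ x : V, (c (Sum.inl x) : ℕ) = (Fintype.equivFin V x : ℕ) := fun _ => rfl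
  have hvinr : ∀ (e : T.edgeSet) (w : Fin n),
      (c (Sum.inr (e, w)) : ℕ) = Fintype.card V + (w : ℕ) := fun _ _ => rfl
  have P1 : ∀ x y : V, c (Sum.inl x) = c (Sum.inl y) → x = y := by
    intro x y h
    have := congrArg Fin.val h
    rw [hvinl, hvinl] at this
    exact (Fintype.equivFin V).injective (Fin.ext this)
  have P2 : ∀ (x : V) (e : T.edgeSet) (w : Fin n), c (Sum.inl x) ≠ c (Sum.inr (e, w)) := by
    intro x e w h
    have := congrArg Fin.val h
    rw [hvinl, hvinr] at this
    have := (Fintype.equivFin V x).2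
    omega
  have P3 : ∀ (e : T.edgeSet) (w : Fin n) (e' : T.edgeSet) (w' : Fin n),
      c (Sum.inr (e, w)) = c (Sum.inr (e', w')) → w = w' := by
    intro e w e' w' h
    have := congrArg Fin.val h
    rw [hvinr, hvinr] at this
    exact Fin.ext (by omega)
  have Puniq : ∀ (x : V) y, c y = c (Sum.inl x) → y = Sum.inl x := by
    rintro x (z | ⟨e, w⟩) h
    · rw [P1 z x h]
    · exact absurd h.symm (P2 x e w)
  have hinlinj : Function.Injective (ECinl T n) := fun a b h => Sum.inl_injective h
  have hpath : ∀ a b : V, ∃ P : T.Walk a b, P.IsPath := by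
    intro a b
    obtain ⟨W⟩ := hconn a b
    exact ⟨W.toPath.1, W.toPath.2⟩
  have hmapsup : ∀ {a b : V} (P : T.Walk a b),
      (P.map (ECinl T n)).support = P.support.map Sum.inl := by
    intro a b P
    rw [Walk.support_map]
    rfl
  have hnotinr : ∀ {a b : V} (P : T.Walk a b) (e : T.edgeSet) (w : Fin n),
      Sum.inr (e, w) ∉ (P.map (ECinl T n)).support := by
    intro a b P e w hmem
    rw [hmapsup] at hmem
    obtain ⟨z, -, hz⟩ := List.mem_map.mp hmem
    exact Sum.inl_ne_inr hz
  have honlyinl : ∀ {a b : V} (P : T.Walk a b) (z : V ⊕ (T.edgeSet × Fin n)),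
      z ∈ (P.map (ECinl T n)).support → ∃ x, z = Sum.inl x := by
    intro a b P z hz
    rw [hmapsup] at hz
    obtain ⟨x, -, rfl⟩ := List.mem_map.mp hz
    exact ⟨x, rfl⟩
  -- a rainbow path from a tree vertex to a copy vertex
  have case2 : ∀ (x : V) (e' : T.edgeSet) (w' : Fin n),
      ∃ p : (EC T n).Walk (Sum.inl x) (Sum.inr (e', w')), IsRainbowPath (EC T n) c p := by
    intro x e' w'
    obtain ⟨a', ha'⟩ := edge_endpoint (e := e')
    obtain ⟨P, hP⟩ := hpath x a'
    have h2 : (EC T n).Adj (ECinl T n a') (Sum.inr (e', w')) := (EC_adj_inl_inr).mpr ha'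
    have hcat : ((P.map (ECinl T n)).concat h2).IsPath :=
      isPath_concat (Walk.map_isPath_of_injective hinlinj hP) h2 (hnotinr P e' w')
    refine ⟨_, isRainbowPath_of_injOn hcat ?_⟩
    have hint : ((P.map (ECinl T n)).concat h2).support.tail.dropLast
        = (P.map (ECinl T n)).support.tail := by
      rw [Walk.support_concat,
        List.tail_append_of_ne_nil (Walk.support_ne_nil _), List.dropLast_concat]
    erw [hint]
    intro a ha b hb hcc
    obtain ⟨xa, rfl⟩ := honlyinl P a ((List.tail_sublist _).mem ha)
    obtain ⟨xb, rfl⟩ := honlyinl P b ((List.tail_sublist _).mem hb)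
    rw [P1 xa xb hcc]
  have hRV : IsRVColoring (EC T n) c := by
    rintro (x | ⟨e, w⟩) (y | ⟨e', w'⟩)
    · obtain ⟨P, hP⟩ := hpath x y
      refine ⟨P.map (ECinl T n),
        isRainbowPath_of_injOn (Walk.map_isPath_of_injective hinlinj hP) ?_⟩
      intro a ha b hb hcc
      obtain ⟨xa, rfl⟩ := honlyinl P a
        (((List.dropLast_sublist _).trans (List.tail_sublist _)).mem ha)
      obtain ⟨xb, rfl⟩ := honlyinl P b
        (((List.dropLast_sublist _).trans (List.tail_sublist _)).mem hb)
      rw [P1 xa xb hcc]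
    · exact case2 x e' w'
    · obtain ⟨p, hp⟩ := case2 y e w
      exact ⟨p.reverse, hp.rev⟩
    · by_cases hee : e = e'
      · subst hee
        by_cases hww : w = w'
        · subst hww
          exact ⟨Walk.nil, Walk.IsPath.nil, by simp⟩
        · refine ⟨Walk.cons ((EC_adj_inr_inr).mpr ⟨rfl, hww⟩) Walk.nil, ?_, ?_⟩
          · exact Walk.IsPath.nil.cons (by simp [hww])
          · simp
      · obtain ⟨a, ha⟩ := edge_endpoint (e := e)
        obtain ⟨a', ha'⟩ := edge_endpoint (e := e')
        obtain ⟨P, hP⟩ := hpath a a'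
        have h1 : (EC T n).Adj (Sum.inr (e, w)) (ECinl T n a) := (EC_adj_inr_inl).mpr ha
        have h2 : (EC T n).Adj (ECinl T n a') (Sum.inr (e', w')) := (EC_adj_inl_inr).mpr ha'
        have hcat : ((P.map (ECinl T n)).concat h2).IsPath :=
          isPath_concat (Walk.map_isPath_of_injective hinlinj hP) h2 (hnotinr P e' w')
        have hnotin2 : Sum.inr (e, w) ∉ ((P.map (ECinl T n)).concat h2).support := by
          rw [Walk.support_concat]
          intro hmem
          rcases List.mem_append.mp hmem with hmem' | hmem'
          · exact hnotinr P e w hmem'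
          · rw [List.mem_singleton] at hmem'
            rw [Sum.inr.injEq, Prod.mk.injEq] at hmem'
            exact hee hmem'.1
        refine ⟨Walk.cons h1 ((P.map (ECinl T n)).concat h2),
          isRainbowPath_of_injOn (Walk.IsPath.cons hcat hnotin2) ?_⟩
        have hint : (Walk.cons h1 ((P.map (ECinl T n)).concat h2)).support.tail.dropLast
            = (P.map (ECinl T n)).support := by
          rw [Walk.support_cons, List.tail_cons, Walk.support_concat,
            List.dropLast_concat]
        rw [hint]
        intro a1 ha1 b1 hb1 hcc
        obtain ⟨xa, rfl⟩ := honlyinl P a1 ha1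
        obtain ⟨xb, rfl⟩ := honlyinl P b1 hb1
        rw [P1 xa xb hcc]
  have hcode : ∀ (x : V) s, rainbowCode (EC T n) c s (c (Sum.inl x))
      = (EC T n).dist s (Sum.inl x) := fun x s => rainbowCode_unique (Puniq x) rfl s
  have hloc : Function.Injective (rainbowCode (EC T n) c) := by
    have main : ∀ (x : V) (t : V ⊕ (T.edgeSet × Fin n)),
        rainbowCode (EC T n) c (Sum.inl x) = rainbowCode (EC T n) c t → Sum.inl x = t := by
      intro x t h
      have h0 := congrFun h (c (Sum.inl x))
      rw [hcode, hcode, SimpleGraph.dist_self] at h0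
      exact ((hconnE t (Sum.inl x)).dist_eq_zero_iff.mp h0.symm).symm
    rintro (x | ⟨e, w⟩) t hst
    · exact main x t hst
    rcases t with y | ⟨e', w'⟩
    · exact (main y _ hst.symm).symm
    by_cases hww : w = w'
    · subst hww
      by_cases hee : e = e'
      · rw [hee]
      · exfalso
        have hVne : (e : Sym2 V) ≠ (e' : Sym2 V) := fun hh => hee (Subtype.ext hh)
        obtain ⟨x, hx⟩ := sym2_symmdiff hVne
        have hone : ∀ f f' : T.edgeSet, x ∈ (f : Sym2 V) → x ∉ (f' : Sym2 V) →
            rainbowCode (EC T n) c (Sum.inr (f, w)) = rainbowCode (EC T n) c (Sum.inr (f', w))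
            → False := by
          intro f f' hxf hxf' hcc
          have h1 := congrFun hcc (c (Sum.inl x))
          rw [hcode, hcode,
            SimpleGraph.dist_eq_one_iff_adj.mpr ((EC_adj_inr_inl).mpr hxf)] at h1
          exact hxf' ((EC_adj_inr_inl).mp (SimpleGraph.dist_eq_one_iff_adj.mp h1.symm))
        rcases hx with ⟨h1, h2⟩ | ⟨h1, h2⟩
        · exact hone e e' h1 h2 hst
        · exact hone e' e h1 h2 hst.symm
    · exfalso
      have h0 := congrFun hst (c (Sum.inr (e, w)))
      rw [rainbowCode_self] at h0
      have hcc := (rainbowCode_eq_zero_iff hconnE ⟨Sum.inr (e, w), rfl⟩).mp h0.symm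
      exact hww (P3 e' w' e w hcc).symm
  exact ⟨c, hRV, hloc⟩

end Upper

theorem stmt10 {V : Type*} [Fintype V] (T : SimpleGraph V) (n : ℕ)
    (hT : T.IsTree) (hm : 2 ≤ Fintype.card V) (hn : 2 ≤ n) :
    max (rvc T) (n + 2) ≤ rvcl (edgeCorona T (⊤ : SimpleGraph (Fin n))) ∧
      rvcl (edgeCorona T (⊤ : SimpleGraph (Fin n))) ≤ 2 * Fintype.card V + n - 2 := by
  classical
  obtain ⟨c0, hc0⟩ := upper_exists hT hm hn
  have hmem : (2 * Fintype.card V + n - 2) ∈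
      {k | ∃ c : (V ⊕ (T.edgeSet × Fin n)) → Fin k, IsLocatingRVColoring (EC T n) c} :=
    ⟨c0, hc0⟩
  have hub : rvcl (EC T n) ≤ 2 * Fintype.card V + n - 2 := Nat.sInf_le hmem
  have hne : {k | ∃ c : (V ⊕ (T.edgeSet × Fin n)) → Fin k,
      IsLocatingRVColoring (EC T n) c}.Nonempty := ⟨_, hmem⟩
  obtain ⟨c, hc⟩ := Nat.sInf_mem hne
  refine ⟨max_le ?_ ?_, hub⟩
  · exact Nat.sInf_le ⟨fun x => c (Sum.inl x), rvc_coloring_of_EC hc.1⟩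
  · exact lower_bound_nplus2 hT hm hc
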